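/- Let f ∈ C(x)* be a non-square and let σ be the class of [[0,f],[1,0]] in PGL(2,C(x)). Then the normalizer N of the subgroup generated by σ in PGL(2,C(x)) consists exactly of the classes of matrices of the form [[a, b·f],[b, a]] or [[a, -b·f],[b, -a]] with a, b ∈ C(x) not both zero. -/

import Mathlib

/-- The field `ℂ(x)` of rational functions. -/
abbrev Kx := RatFunc ℂ

/-- The group `PGL(2, ℂ(x)) = GL(2, ℂ(x))` modulo its center. -/
abbrev PGL2Kx :=
  Matrix.GeneralLinearGroup (Fin 2) Kx ⧸
    Subgroup.center (Matrix.GeneralLinearGroup (Fin 2) Kx)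

/-- Let `f ∈ ℂ(x)*` be a non-square and `σ` the class of `[[0, f], [1, 0]]` in
`PGL(2, ℂ(x))`.  Then the normalizer of the subgroup generated by `σ` consists
exactly of the classes of matrices of the form `[[a, b·f], [b, a]]` or
`[[a, -b·f], [b, -a]]` with `a, b ∈ ℂ(x)` not both zero. -/
abbrev GL2 := Matrix.GeneralLinearGroup (Fin 2) Kx

lemma central_of_scalar (Z : GL2) (c : Kx)
    (h : (↑Z : Matrix (Fin 2) (Fin 2) Kx) = !![c, 0; 0, c]) :
    Z ∈ Subgroup.center GL2 := by
  rw [Subgroup.mem_center_iff]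
  intro g
  ext : 1
  push_cast
  rw [h]
  rw [Matrix.eta_fin_two (↑g : Matrix (Fin 2) (Fin 2) Kx), Matrix.mul_fin_two,
    Matrix.mul_fin_two]
  ring_nf

lemma GL2_entries (M : GL2) :
    ¬ ((↑M : Matrix (Fin 2) (Fin 2) Kx) 0 0 = 0 ∧ (↑M : Matrix (Fin 2) (Fin 2) Kx) 0 1 = 0 ∧
       (↑M : Matrix (Fin 2) (Fin 2) Kx) 1 0 = 0 ∧ (↑M : Matrix (Fin 2) (Fin 2) Kx) 1 1 = 0) := by
  rintro ⟨h1, h2, h3, h4⟩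
  have hd := (Matrix.isUnit_iff_isUnit_det _).mp M.isUnit
  rw [Matrix.det_fin_two, h1, h2, h3, h4] at hd
  simp at hd

lemma scalar_of_central (Z : GL2) (hZ : Z ∈ Subgroup.center GL2) :
    ∃ c : Kx, c ≠ 0 ∧ (↑Z : Matrix (Fin 2) (Fin 2) Kx) = !![c, 0; 0, c] := by
  rw [Subgroup.mem_center_iff] at hZ
  have hU : IsUnit (!![1, 1; 0, 1] : Matrix (Fin 2) (Fin 2) Kx) := by
    rw [Matrix.isUnit_iff_isUnit_det]; simp [Matrix.det_fin_two_of]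
  have hV : IsUnit (!![1, 0; 1, 1] : Matrix (Fin 2) (Fin 2) Kx) := by
    rw [Matrix.isUnit_iff_isUnit_det]; simp [Matrix.det_fin_two_of]
  set m : Matrix (Fin 2) (Fin 2) Kx := ↑Z with hm
  have h1' : !![1, 1; 0, 1] * m = m * !![1, 1; 0, 1] := by
    have := congrArg Units.val (hZ hU.unit)
    push_cast at this
    rwa [hU.unit_spec] at this
  have h2' : !![1, 0; 1, 1] * m = m * !![1, 0; 1, 1] := by
    have := congrArg Units.val (hZ hV.unit)
    push_cast at this
    rwa [hV.unit_spec] at this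
  have hdet : IsUnit m := Z.isUnit
  rw [Matrix.eta_fin_two m, Matrix.mul_fin_two, Matrix.mul_fin_two] at h1' h2'
  have e1 := congrFun (congrFun h1' 0) 0
  have e3 := congrFun (congrFun h2' 0) 0
  have e4 := congrFun (congrFun h2' 1) 0
  simp only [Matrix.of_apply, Matrix.cons_val', Matrix.cons_val_zero, Matrix.cons_val_one,
    Matrix.head_cons, Matrix.empty_val', Matrix.cons_val_fin_one, Matrix.head_fin_const,
    one_mul, mul_one, zero_mul, mul_zero, add_zero, zero_add] at e1 e3 e4
  have hb : m 1 0 = 0 := by linear_combination e1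
  have hc : m 0 1 = 0 := by linear_combination -e3
  have hd : m 1 1 = m 0 0 := by linear_combination -e4
  refine ⟨m 0 0, ?_, ?_⟩
  · intro h0
    have hdm : IsUnit m.det := (Matrix.isUnit_iff_isUnit_det m).mp hdet
    rw [Matrix.det_fin_two, hb, hc, hd, h0] at hdm
    simp at hdm
  · ext i j
    fin_cases i <;> fin_cases j <;> simp [hb, hc, hd]

lemma mem_norm_of_commute {G : Type*} [Group G] {x s : G} (h : Commute x s) :
    x ∈ Subgroup.normalizer (Subgroup.zpowers s) := by
  rw [Subgroup.mem_normalizer_iff]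
  intro y
  constructor
  · intro hy
    obtain ⟨n, rfl⟩ := Subgroup.mem_zpowers_iff.mp hy
    refine Subgroup.mem_zpowers_iff.mpr ⟨n, ?_⟩
    rw [(h.zpow_right n).eq, mul_assoc, mul_inv_cancel, mul_one]
  · intro hy
    obtain ⟨n, hn⟩ := Subgroup.mem_zpowers_iff.mp hy
    refine Subgroup.mem_zpowers_iff.mpr ⟨n, ?_⟩
    have h' : Commute x⁻¹ s := h.inv_left
    have : x⁻¹ * (x * y * x⁻¹) * x = y := by group
    rw [← this, ← hn, (h'.zpow_right n).eq, mul_assoc, inv_mul_cancel, mul_one]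

theorem stmt_1 (f : Kx) (hf : f ≠ 0) (hnsq : ¬ IsSquare f)
    (A : Matrix.GeneralLinearGroup (Fin 2) Kx)
    (hA : (↑A : Matrix (Fin 2) (Fin 2) Kx) = !![0, f; 1, 0]) :
    ∀ x : PGL2Kx,
      x ∈ Subgroup.normalizer
        (Subgroup.zpowers (QuotientGroup.mk A : PGL2Kx)) ↔
      ∃ a b : Kx, ¬ (a = 0 ∧ b = 0) ∧
        ∃ g : Matrix.GeneralLinearGroup (Fin 2) Kx,
          (QuotientGroup.mk g : PGL2Kx) = x ∧
          ((↑g : Matrix (Fin 2) (Fin 2) Kx) = !![a, b * f; b, a] ∨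
           (↑g : Matrix (Fin 2) (Fin 2) Kx) = !![a, -(b * f); b, -a]) := by
  intro x
  have hσ2 : (QuotientGroup.mk A : PGL2Kx) * QuotientGroup.mk A = 1 := by
    rw [← QuotientGroup.mk_mul, QuotientGroup.eq_one_iff]
    apply central_of_scalar _ f
    push_cast
    rw [hA, Matrix.mul_fin_two]
    norm_num
  have hσne : (QuotientGroup.mk A : PGL2Kx) ≠ 1 := by
    intro h
    rw [QuotientGroup.eq_one_iff] at h
    obtain ⟨c, hc0, hc⟩ := scalar_of_central A h
    rw [hA] at hc
    have := congrFun (congrFun hc 1) 0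
    simp at this
  constructor
  · -- forward direction
    intro hx
    obtain ⟨M, hM⟩ := QuotientGroup.mk_surjective x
    set σ : PGL2Kx := QuotientGroup.mk A with hσ
    have hconj : x * σ * x⁻¹ ∈ Subgroup.zpowers σ :=
      (Subgroup.mem_normalizer_iff.mp hx σ).mp (Subgroup.mem_zpowers σ)
    obtain ⟨n, hn⟩ := Subgroup.mem_zpowers_iff.mp hconj
    have hzt : σ ^ (2 : ℤ) = 1 := by rw [zpow_two]; exact hσ2
    have hcases : σ ^ n = 1 ∨ σ ^ n = σ := by
      rcases Int.even_or_odd n with ⟨k, hk⟩ | ⟨k, hk⟩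
      · left
        rw [hk, ← two_mul, zpow_mul, hzt, one_zpow]
      · right
        rw [hk, zpow_add, zpow_mul, hzt, one_zpow, one_mul, zpow_one]
    have hcσ : x * σ * x⁻¹ = σ := by
      rcases hcases with h1 | h1
      · exfalso
        apply hσne
        have h2 : x * σ * x⁻¹ = 1 := by rw [← hn, h1]
        have := congrArg (fun y => x⁻¹ * y * x) h2
        simpa [mul_assoc] using this
      · rw [← hn, h1]
    set Z : GL2 := (M * A * M⁻¹)⁻¹ * A with hZdef
    have hGL : Z ∈ Subgroup.center GL2 := by
      rw [← QuotientGroup.eq]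
      show (QuotientGroup.mk (M * A * M⁻¹) : PGL2Kx) = QuotientGroup.mk A
      rw [QuotientGroup.mk_mul, QuotientGroup.mk_mul, QuotientGroup.mk_inv, hM, ← hσ, hcσ]
    obtain ⟨c, hc0, hc⟩ := scalar_of_central _ hGL
    have hZcomm := Subgroup.mem_center_iff.mp hGL
    have h1 : M⁻¹ * Z = Z * M⁻¹ := hZcomm M⁻¹
    have hkey : M * A * Z = A * M := by
      calc M * A * Z
          = M * A * (Z * M⁻¹) * M := by rw [hZdef]; group
        _ = M * A * (M⁻¹ * Z) * M := by rw [← h1]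
        _ = A * M := by rw [hZdef]; group
    have hmat := congrArg Units.val hkey
    simp only [Units.val_mul] at hmat
    rw [hc, hA, Matrix.eta_fin_two (↑M : Matrix (Fin 2) (Fin 2) Kx), Matrix.mul_fin_two,
      Matrix.mul_fin_two, Matrix.mul_fin_two] at hmat
    have E00 := congrFun (congrFun hmat 0) 0
    have E01 := congrFun (congrFun hmat 0) 1
    have E10 := congrFun (congrFun hmat 1) 0
    have E11 := congrFun (congrFun hmat 1) 1
    simp only [Matrix.of_apply, Matrix.cons_val', Matrix.cons_val_zero, Matrix.cons_val_one,
      Matrix.head_cons, Matrix.empty_val', Matrix.cons_val_fin_one, Matrix.head_fin_const,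
      one_mul, mul_one, zero_mul, mul_zero, add_zero, zero_add] at E00 E01 E10 E11
    have hE01' : (↑M : Matrix (Fin 2) (Fin 2) Kx) 0 0 * c = (↑M : Matrix (Fin 2) (Fin 2) Kx) 1 1 :=
      mul_left_cancel₀ hf (by linear_combination E01)
    have hcc : c * c = 1 := by
      by_contra hne
      have hsub : c * c - 1 ≠ 0 := sub_ne_zero.mpr hne
      have k0 : (↑M : Matrix (Fin 2) (Fin 2) Kx) 0 0 = 0 := by
        have h0 : (↑M : Matrix (Fin 2) (Fin 2) Kx) 0 0 * (c * c - 1) = 0 := by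
          linear_combination c * hE01' + E10
        exact (mul_eq_zero.mp h0).resolve_right hsub
      have k2 : (↑M : Matrix (Fin 2) (Fin 2) Kx) 0 1 = 0 := by
        have h0 : (↑M : Matrix (Fin 2) (Fin 2) Kx) 0 1 * (c * c - 1) = 0 := by
          linear_combination c * E00 + E11
        exact (mul_eq_zero.mp h0).resolve_right hsub
      have k1 : (↑M : Matrix (Fin 2) (Fin 2) Kx) 1 0 = 0 := by
        have h0 : f * ((↑M : Matrix (Fin 2) (Fin 2) Kx) 1 0 * (c * c - 1)) = 0 := by
          linear_combination c * E11 + E00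
        exact (mul_eq_zero.mp ((mul_eq_zero.mp h0).resolve_left hf)).resolve_right hsub
      have k3 : (↑M : Matrix (Fin 2) (Fin 2) Kx) 1 1 = 0 := by
        have h0 : (↑M : Matrix (Fin 2) (Fin 2) Kx) 1 1 * (c * c - 1) = 0 := by
          linear_combination c * E10 + hE01'
        exact (mul_eq_zero.mp h0).resolve_right hsub
      exact GL2_entries M ⟨k0, k2, k1, k3⟩
    rcases mul_self_eq_one_iff.mp hcc with h1 | h1
    · rw [h1] at hE01' E11
      refine ⟨(↑M : Matrix (Fin 2) (Fin 2) Kx) 0 0, (↑M : Matrix (Fin 2) (Fin 2) Kx) 1 0,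
        ?_, M, hM, Or.inl ?_⟩
      · rintro ⟨ha0, hb0⟩
        refine GL2_entries M ⟨ha0, ?_, hb0, ?_⟩
        · linear_combination f * hb0 - E11
        · linear_combination ha0 - hE01'
      · have hm01 : (↑M : Matrix (Fin 2) (Fin 2) Kx) 0 1 =
            (↑M : Matrix (Fin 2) (Fin 2) Kx) 1 0 * f := by linear_combination -E11
        have hm11 : (↑M : Matrix (Fin 2) (Fin 2) Kx) 1 1 =
            (↑M : Matrix (Fin 2) (Fin 2) Kx) 0 0 := by linear_combination -hE01'
        ext i j
        fin_cases i <;> fin_cases j <;> simp [hm01, hm11]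
    · rw [h1] at hE01' E11
      refine ⟨(↑M : Matrix (Fin 2) (Fin 2) Kx) 0 0, (↑M : Matrix (Fin 2) (Fin 2) Kx) 1 0,
        ?_, M, hM, Or.inr ?_⟩
      · rintro ⟨ha0, hb0⟩
        refine GL2_entries M ⟨ha0, ?_, hb0, ?_⟩
        · linear_combination -(f * hb0) - E11
        · linear_combination -ha0 - hE01'
      · have hm01 : (↑M : Matrix (Fin 2) (Fin 2) Kx) 0 1 =
            -((↑M : Matrix (Fin 2) (Fin 2) Kx) 1 0 * f) := by linear_combination -E11
        have hm11 : (↑M : Matrix (Fin 2) (Fin 2) Kx) 1 1 =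
            -((↑M : Matrix (Fin 2) (Fin 2) Kx) 0 0) := by linear_combination -hE01'
        ext i j
        fin_cases i <;> fin_cases j <;> simp [hm01, hm11]
  · -- backward direction
    rintro ⟨a, b, hab, g, hg, hcase⟩
    rw [← hg]
    have hcomm : Commute (QuotientGroup.mk g : PGL2Kx) (QuotientGroup.mk A) := by
      rcases hcase with hm | hm
      · have hgA : g * A = A * g := by
          ext : 1
          push_cast
          rw [hm, hA]
          ext i j
          fin_cases i <;> fin_cases j <;>
            simp [Matrix.mul_apply, Fin.sum_univ_two] <;> ring
        show _ * _ = _ * _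
        rw [← QuotientGroup.mk_mul, hgA, QuotientGroup.mk_mul]
      · have hgA : g * A = (-A) * g := by
          ext : 1
          push_cast
          rw [hm, hA]
          ext i j
          fin_cases i <;> fin_cases j <;>
            simp [Matrix.mul_apply, Fin.sum_univ_two] <;> ring
        have hmkneg : (QuotientGroup.mk (-A) : PGL2Kx) = QuotientGroup.mk A := by
          rw [QuotientGroup.eq]
          have hA1 : (-A)⁻¹ * A = (-1 : GL2) := by
            have hAA : A = (-A) * (-1 : GL2) := by
              ext : 1
              push_cast
              simp
            exact inv_mul_eq_iff_eq_mul.mpr hAA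
          rw [hA1]
          apply central_of_scalar _ (-1 : Kx)
          push_cast
          ext i j
          fin_cases i <;> fin_cases j <;> simp [Matrix.one_apply]
        show _ * _ = _ * _
        rw [← QuotientGroup.mk_mul, hgA, QuotientGroup.mk_mul, hmkneg]
    exact mem_norm_of_commute hcomm
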